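/- Shamir (n,k)-threshold scheme correctness: over the field GF(p) with p > n prime, let s ∈ GF(p) and let a₁,…,a_{k−1} be chosen uniformly and independently in GF(p), defining y(x) = s + a₁x + ⋯ + a_{k−1}x^{k−1} and shares D_i = y(i) for i = 1,…,n. Then any k of the pairs (i, D_i) determine s uniquely (via polynomial interpolation), while for any set T of at most k−1 indices, the joint distribution of (D_i)_{i∈T} is the same for every value of the secret s. -/

import Mathlib

open Polynomial

/-- The Shamir share of party `i` (evaluation of the polynomial with
coefficient vector `a` at the point `i + 1` in `GF(p)`). -/
def shamirShare {p k n : ℕ} (a : Fin k → ZMod p) (i : Fin n) : ZMod p :=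
  ∑ j : Fin k, a j * ((i : ZMod p) + 1) ^ (j : ℕ)

section aux
variable {p n k : ℕ} [Fact p.Prime]

/-- The evaluation point of party `i`. -/
noncomputable def shamirPt {p n : ℕ} (i : Fin n) : ZMod p := (i : ZMod p) + 1

lemma shamirPt_injective (hpn : n < p) :
    Function.Injective (shamirPt (p := p) (n := n)) := by
  intro i j h
  have hp : 0 < p := (Fact.out : p.Prime).pos
  have : (((i : ℕ) + 1 : ℕ) : ZMod p) = (((j : ℕ) + 1 : ℕ) : ZMod p) := by
    push_cast; simpa [shamirPt] using h
  have hi : (i : ℕ) + 1 < p := by omega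
  have hj : (j : ℕ) + 1 < p := by omega
  have := ZMod.val_cast_of_lt hi ▸ ZMod.val_cast_of_lt hj ▸ congrArg ZMod.val this
  exact Fin.ext (by omega)

lemma shamirPt_ne_zero (hpn : n < p) (i : Fin n) : shamirPt (p := p) i ≠ 0 := by
  intro h
  have hp : 0 < p := (Fact.out : p.Prime).pos
  have : (((i : ℕ) + 1 : ℕ) : ZMod p) = ((0 : ℕ) : ZMod p) := by push_cast; simpa [shamirPt] using h
  have hi : (i : ℕ) + 1 < p := by omega
  have := ZMod.val_cast_of_lt hi ▸ ZMod.val_cast_of_lt hp ▸ congrArg ZMod.val this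
  omega

lemma shamirShare_eq_eval (a : Fin k → ZMod p) (i : Fin n) :
    shamirShare a i = (∑ j : Fin k, C (a j) * X ^ (j : ℕ)).eval (shamirPt i) := by
  simp [shamirShare, shamirPt, eval_finset_sum]

end aux

theorem shamir_threshold (p n k : ℕ) [Fact p.Prime] (hpn : n < p)
    (hk : 0 < k) :
    (∀ T : Finset (Fin n), T.card = k →
      ∃ g : ({i : Fin n // i ∈ T} → ZMod p) → ZMod p,
        ∀ a : Fin k → ZMod p, g (fun i => shamirShare a i.1) = a ⟨0, hk⟩) ∧
    (∀ T : Finset (Fin n), T.card ≤ k - 1 →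
      ∀ s s' : ZMod p, ∀ w : {i : Fin n // i ∈ T} → ZMod p,
        (Finset.univ.filter fun a : Fin k → ZMod p =>
            a ⟨0, hk⟩ = s ∧
              ∀ i : {i : Fin n // i ∈ T}, shamirShare a i.1 = w i).card =
        (Finset.univ.filter fun a : Fin k → ZMod p =>
            a ⟨0, hk⟩ = s' ∧
              ∀ i : {i : Fin n // i ∈ T}, shamirShare a i.1 = w i).card) := by
  constructor
  · -- correctness
    intro T hT
    have hinj : Function.Injective
        (fun (a : Fin k → ZMod p) (i : {i : Fin n // i ∈ T}) => shamirShare a i.1) := by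
      intro a b hab
      have hPQ : (∑ j : Fin k, C (a j) * X ^ (j : ℕ)) = ∑ j : Fin k, C (b j) * X ^ (j : ℕ) := by
        refine Polynomial.eq_of_degrees_lt_of_eval_index_eq (v := fun i : Fin n => shamirPt i)
          T (fun x _ y _ h => shamirPt_injective hpn h) ?_ ?_ ?_
        · rw [hT]; exact degree_sum_fin_lt _
        · rw [hT]; exact degree_sum_fin_lt _
        · intro i hi
          have := congrFun hab ⟨i, hi⟩
          simpa [shamirShare_eq_eval] using this
      funext j
      have := congrArg (fun q => Polynomial.coeff q (j : ℕ)) hPQ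
      simpa [Polynomial.finset_sum_coeff, Polynomial.coeff_C_mul, Polynomial.coeff_X_pow,
        Fin.val_eq_val] using this
    obtain ⟨g0, hg0⟩ := hinj.hasLeftInverse
    exact ⟨fun w => g0 w ⟨0, hk⟩, fun a => congrFun (hg0 a) ⟨0, hk⟩⟩
  · -- privacy
    intro T hT s s' w
    -- key: a count ≤ count lemma, symmetric in s,s'
    have key : ∀ s s' : ZMod p,
        (Finset.univ.filter fun a : Fin k → ZMod p =>
            a ⟨0, hk⟩ = s ∧ ∀ i : {i : Fin n // i ∈ T}, shamirShare a i.1 = w i).card ≤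
        (Finset.univ.filter fun a : Fin k → ZMod p =>
            a ⟨0, hk⟩ = s' ∧ ∀ i : {i : Fin n // i ∈ T}, shamirShare a i.1 = w i).card := by
      intro s s'
      set Λ : Polynomial (ZMod p) := ∏ i ∈ T, (1 - C (shamirPt i)⁻¹ * X) with hΛ
      have hdeg : Λ.natDegree < k := by
        have h1 : Λ.natDegree ≤ ∑ i ∈ T, (1 - C (shamirPt (p := p) i)⁻¹ * X).natDegree :=
          Polynomial.natDegree_prod_le _ _
        have h2 : ∀ i ∈ T, (1 - C (shamirPt (p := p) i)⁻¹ * X).natDegree ≤ 1 := by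
          intro i _
          refine (Polynomial.natDegree_sub_le _ _).trans ?_
          have : ((C (shamirPt (p := p) i)⁻¹ * X : Polynomial (ZMod p))).natDegree ≤ 1 :=
            (Polynomial.natDegree_mul_le).trans (by simp)
          simpa using this
        have := h1.trans (Finset.sum_le_card_nsmul T _ 1 h2)
        simp only [smul_eq_mul, mul_one] at this
        omega
      have hΛ0 : Λ.coeff 0 = 1 := by
        rw [Polynomial.coeff_zero_eq_eval_zero]
        simp [hΛ, Polynomial.eval_prod]
      have hΛi : ∀ i : Fin n, i ∈ T → Λ.eval (shamirPt i) = 0 := by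
        intro i hi
        rw [hΛ, Polynomial.eval_prod]
        refine Finset.prod_eq_zero hi ?_
        simp [shamirPt_ne_zero hpn i, inv_mul_cancel₀ (shamirPt_ne_zero hpn i)]
      set c : Fin k → ZMod p := fun j => Λ.coeff (j : ℕ) with hc
      have hceval : ∀ x : ZMod p, ∑ j : Fin k, c j * x ^ (j : ℕ) = Λ.eval x := by
        intro x
        rw [Polynomial.eval_eq_sum_range' hdeg,
          ← Fin.sum_univ_eq_sum_range (fun j : ℕ => Λ.coeff j * x ^ j) k]
      refine Finset.card_le_card_of_injOn (fun a j => a j + (s' - s) * c j) ?_ ?_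
      · intro a ha
        simp only [Finset.mem_coe, Finset.mem_filter, Finset.mem_univ, true_and] at ha ⊢
        obtain ⟨ha0, haw⟩ := ha
        constructor
        · have : c ⟨0, hk⟩ = 1 := by simpa [hc] using hΛ0
          rw [ha0, this]; ring
        · intro i
          have : shamirShare (fun j => a j + (s' - s) * c j) i.1
              = shamirShare a i.1 + (s' - s) * Λ.eval (shamirPt i.1) := by
            simp only [shamirShare, add_mul, Finset.sum_add_distrib, mul_assoc,
              ← Finset.mul_sum, shamirPt]
            rw [← hceval]
          rw [this, hΛi i.1 i.2, haw i]; ring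
      · intro a _ b _ hab
        funext j
        have := congrFun hab j
        simpa using this
    exact le_antisymm (key s s') (key s' s)
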